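/- Let p be an odd prime and let i ≥ 1 and j be integers with p^{i−1} + 1 ≤ j ≤ p^i. Then p^{2i+1} divides p^j·C(p^i, j), where C(m, r) denotes the binomial coefficient. -/

import Mathlib

lemma aux_three (n : ℕ) : 2 * n + 1 ≤ 3 ^ n := by
  induction n with
  | zero => simp
  | succ n ih => have : 3 ^ (n+1) = 3 * 3 ^ n := pow_succ' 3 n; omega

theorem stmt_11 (p : ℕ) (hp : p.Prime) (hodd : Odd p)
    (i j : ℕ) (hi : 1 ≤ i) (hj1 : p ^ (i - 1) + 1 ≤ j) (hj2 : j ≤ p ^ i) :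
    (p : ℤ) ^ (2 * i + 1) ∣ (p : ℤ) ^ j * ((p ^ i).choose j : ℤ) := by
  have hp3 : 3 ≤ p := by
    have h2 : p ≠ 2 := fun h => by rw [h] at hodd; exact (by decide : ¬ Odd 2) hodd
    have := hp.two_le
    omega
  have hj0 : j ≠ 0 := by have := Nat.pow_pos (n := i-1) hp.pos; omega
  set k := multiplicity p j with hk
  have hpk : p ^ k ∣ j := pow_multiplicity_dvd p j
  have hki : k ≤ i := by
    have : p ^ k ≤ p ^ i := le_trans (Nat.le_of_dvd (Nat.pos_of_ne_zero hj0) hpk) hj2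
    exact (Nat.pow_le_pow_iff_right hp.one_lt).1 this
  -- p ^ (i - k) divides the binomial coefficient
  have hC : p ^ (i - k) ∣ (p ^ i).choose j := by
    apply pow_dvd_of_le_emultiplicity
    rw [Nat.Prime.emultiplicity_choose_prime_pow hp hj2 hj0]
  -- key inequality: i + 1 + k ≤ j
  have hkey : i + 1 + k ≤ j := by
    rcases eq_or_lt_of_le hki with h | h
    · -- k = i, so j = p ^ i
      have hdvd : p ^ i ∣ j := h ▸ hpk
      have hj : j = p ^ i := le_antisymm hj2 (Nat.le_of_dvd (Nat.pos_of_ne_zero hj0) hdvd)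
      have h3 : 3 ^ i ≤ p ^ i := Nat.pow_le_pow_left hp3 i
      have := aux_three i
      omega
    · -- k ≤ i - 1, use j ≥ p^(i-1) + 1 ≥ 2(i-1)+1+1
      have h3 : 3 ^ (i-1) ≤ p ^ (i-1) := Nat.pow_le_pow_left hp3 (i-1)
      have := aux_three (i-1)
      omega
  have hdvd : (p : ℕ) ^ (2 * i + 1) ∣ p ^ j * (p ^ i).choose j := by
    have : p ^ (j + (i - k)) ∣ p ^ j * (p ^ i).choose j := by
      rw [pow_add]; exact mul_dvd_mul dvd_rfl hC
    exact dvd_trans (pow_dvd_pow p (by omega)) this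
  exact_mod_cast Int.natCast_dvd_natCast.2 hdvd
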